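/- arXiv:math/0609659 — 5 statements merged into one kernel-verified Lean document; each statement's English description precedes it below -/
import Mathlib

section
/- Let K be an infinite field, n ≥ 1, a ∈ Kˣ, and r ≥ 0 an integer. Let P : Multiset({1,…,n} × {1,…,n} × ℤ) → K be a function which is not identically zero and which is homogeneous of degree r, i.e. P(m) ≠ 0 implies card(m) = r. Then there exists g ∈ M_n(K[t,t⁻¹]) with det(η_a(g)) = 1 such that Σ_m P(m)·∏_{(i,j,l)∈m} c_{i,j,l}(g) ≠ 0 (a sum with only finitely many nonzero terms). In other words, every nonzero formal homogeneous polynomial of degree r in the coordinate functions has a nonvanishing point on the semigroup SL̃_{n,a} = {g : det(η_a(g)) = 1}. -/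
open LaurentPolynomial

noncomputable section

/-- Evaluation at the unit `c` : the `K`-algebra homomorphism `K[T;T⁻¹] → K`
determined by `T ↦ c` (hence `T^l ↦ c^l`). -/
def evalAt {K : Type*} [Field K] (c : Kˣ) : K[T;T⁻¹] →ₐ[K] K :=
  AddMonoidAlgebra.lift K _ ℤ ((Units.coeHom _).comp (zpowersHom _ c))

namespace SLaux

variable {K : Type*} [Field K] {n : ℕ} {E : Finset ℤ}

/-- The embedding of restricted indices into full indices. -/
def emb (n : ℕ) (E : Finset ℤ) : Fin n × Fin n × {l // l ∈ E} → Fin n × Fin n × ℤ :=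
  fun p => (p.1, p.2.1, (p.2.2 : ℤ))

lemma emb_injective : Function.Injective (emb n E) := by
  rintro ⟨i, j, l⟩ ⟨i', j', l'⟩ h
  simp only [emb, Prod.mk.injEq] at h
  obtain ⟨h1, h2, h3⟩ := h
  exact Prod.ext h1 (Prod.ext h2 (Subtype.ext h3))

/-- The Laurent-polynomial matrix with prescribed coefficients `z` on exponents in `E`. -/
def gmat (z : Fin n × Fin n × {l // l ∈ E} → K) : Matrix (Fin n) (Fin n) K[T;T⁻¹] :=
  Matrix.of fun i j => ∑ l : {l // l ∈ E}, AddMonoidAlgebra.single (l : ℤ) (z (i, j, l))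

lemma gmat_coeff (z : Fin n × Fin n × {l // l ∈ E} → K) (i j : Fin n) (l' : ℤ) :
    (gmat z i j).coeff l' = if h : l' ∈ E then z (i, j, ⟨l', h⟩) else 0 := by
  classical
  show ((∑ l : {l // l ∈ E}, AddMonoidAlgebra.single (l : ℤ) (z (i, j, l)) : K[T;T⁻¹])).coeff l' = _
  rw [AddMonoidAlgebra.coeff_sum, Finsupp.finset_sum_apply]
  simp only [AddMonoidAlgebra.coeff_single, Finsupp.single_apply]
  split
  · next h =>
      rw [Finset.sum_eq_single (⟨l', h⟩ : {l // l ∈ E})]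
      · simp
      · intro b _ hb
        rw [if_neg]
        intro hc; exact hb (Subtype.ext hc)
      · simp
  · next h =>
      apply Finset.sum_eq_zero
      intro b _
      rw [if_neg]
      intro hc; exact h (hc ▸ b.2)

lemma gmat_coeff_emb (z : Fin n × Fin n × {l // l ∈ E} → K)
    (q : Fin n × Fin n × {l // l ∈ E}) :
    (gmat z (emb n E q).1 (emb n E q).2.1).coeff (emb n E q).2.2 = z q := by
  obtain ⟨i, j, l⟩ := q
  show (gmat z i j).coeff (l : ℤ) = _
  rw [gmat_coeff, dif_pos l.2]

lemma evalAt_single (a : Kˣ) (l : ℤ) (c : K) :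
    evalAt a (AddMonoidAlgebra.single l c : K[T;T⁻¹]) = c * ((a ^ l : Kˣ) : K) := by
  have : (AddMonoidAlgebra.single l c : K[T;T⁻¹]) = AddMonoidAlgebra.single l c := rfl
  rw [this, evalAt, AddMonoidAlgebra.lift_single]
  simp [zpowersHom]

/-- The evaluated matrix. -/
def Amat (a : Kˣ) (z : Fin n × Fin n × {l // l ∈ E} → K) : Matrix (Fin n) (Fin n) K :=
  Matrix.of fun i j => ∑ l : {l // l ∈ E}, z (i, j, l) * ((a ^ (l : ℤ) : Kˣ) : K)

lemma map_gmat (a : Kˣ) (z : Fin n × Fin n × {l // l ∈ E} → K) :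
    (gmat z).map (fun q => evalAt a q) = Amat a z := by
  funext i j
  simp only [Matrix.map_apply, gmat, Amat, Matrix.of_apply, map_sum, evalAt_single]

/-- Monomial attached to a multiset of variables. -/
def Xm {ι : Type*} (μ : Multiset ι) : MvPolynomial ι K := (μ.map MvPolynomial.X).prod

lemma eval_Xm {ι : Type*} (z : ι → K) (μ : Multiset ι) :
    MvPolynomial.eval z (Xm μ) = (μ.map z).prod := by
  rw [Xm, map_multiset_prod, Multiset.map_map]
  simp [Function.comp_def]

lemma Xm_eq_monomial {ι : Type*} [DecidableEq ι] (μ : Multiset ι) :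
    (Xm μ : MvPolynomial ι K) = MvPolynomial.monomial μ.toFinsupp 1 := by
  induction μ using Multiset.induction_on with
  | empty => simp [Xm, MvPolynomial.monomial_zero']
  | cons p μ ih =>
      have hcons : Xm (K := K) (p ::ₘ μ) = MvPolynomial.X p * Xm μ := by
        rw [Xm, Xm, Multiset.map_cons, Multiset.prod_cons]
      rw [hcons, ih]
      have h1 : Multiset.toFinsupp (p ::ₘ μ) = Finsupp.single p 1 + Multiset.toFinsupp μ := by
        rw [← Multiset.singleton_add, map_add, Multiset.toFinsupp_singleton]
      rw [h1, MvPolynomial.X, MvPolynomial.monomial_mul, one_mul]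

lemma degree_toFinsupp {ι : Type*} [DecidableEq ι] (μ : Multiset ι) :
    (Multiset.toFinsupp μ).degree = Multiset.card μ := by
  rw [← Multiset.toFinsupp_sum_eq μ]; rfl

/-- The determinant polynomial. -/
def deltaP (a : Kˣ) (n : ℕ) (E : Finset ℤ) : MvPolynomial (Fin n × Fin n × {l // l ∈ E}) K :=
  Matrix.det (Matrix.of fun i j =>
    ∑ l : {l // l ∈ E}, MvPolynomial.C ((a ^ (l : ℤ) : Kˣ) : K) * MvPolynomial.X (i, j, l))

lemma eval_deltaP (a : Kˣ) (z : Fin n × Fin n × {l // l ∈ E} → K) :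
    MvPolynomial.eval z (deltaP a n E) = (Amat a z).det := by
  rw [deltaP, RingHom.map_det]
  congr 1
  funext i j
  simp only [RingHom.mapMatrix_apply, Matrix.map_apply, Amat, Matrix.of_apply, map_sum,
    map_mul, MvPolynomial.eval_C, MvPolynomial.eval_X]
  exact Finset.sum_congr rfl fun l _ => by ring

lemma deltaP_isHomogeneous (a : Kˣ) : (deltaP (K := K) a n E).IsHomogeneous n := by
  rw [deltaP, Matrix.det_apply']
  apply MvPolynomial.IsHomogeneous.sum
  intro σ _
  have h1 : ∀ i : Fin n, (∑ l : {l // l ∈ E},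
      MvPolynomial.C ((a ^ (l : ℤ) : Kˣ) : K) * MvPolynomial.X (σ i, i, l)).IsHomogeneous 1 := by
    intro i
    apply MvPolynomial.IsHomogeneous.sum
    intro l _
    exact MvPolynomial.isHomogeneous_C_mul_X _ _
  have h2 : (∏ i : Fin n, ∑ l : {l // l ∈ E},
      MvPolynomial.C ((a ^ (l : ℤ) : Kˣ) : K) * MvPolynomial.X (σ i, i, l)).IsHomogeneous n := by
    have := MvPolynomial.IsHomogeneous.prod Finset.univ
      (fun i => ∑ l : {l // l ∈ E},
        MvPolynomial.C ((a ^ (l : ℤ) : Kˣ) : K) * MvPolynomial.X (σ i, i, l))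
      (fun _ => 1) (fun i _ => h1 i)
    simpa using this
  have h3 : (((Equiv.Perm.sign σ : ℤ) : MvPolynomial (Fin n × Fin n × {l // l ∈ E}) K)) =
      MvPolynomial.C ((Equiv.Perm.sign σ : ℤ) : K) := by
    rw [map_intCast]
  rw [h3]
  exact h2.C_mul _

lemma Amat_one (a : Kˣ) (h0 : (0 : ℤ) ∈ E) :
    Amat (n := n) (E := E) a (fun p => if p.1 = p.2.1 ∧ (p.2.2 : ℤ) = 0 then 1 else 0) = 1 := by
  funext i j
  by_cases hij : i = j
  · subst hij
    simp only [Amat, Matrix.of_apply, Matrix.one_apply_eq]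
    rw [Finset.sum_eq_single (⟨0, h0⟩ : {l // l ∈ E})]
    · simp
    · intro b _ hb
      rw [if_neg, zero_mul]
      rintro ⟨-, hb0⟩
      exact hb (Subtype.ext hb0)
    · simp
  · simp only [Amat, Matrix.of_apply, Matrix.one_apply_ne hij]
    apply Finset.sum_eq_zero
    intro b _
    rw [if_neg, zero_mul]
    rintro ⟨h1, -⟩
    exact hij h1

lemma deltaP_ne_zero (a : Kˣ) (h0 : (0 : ℤ) ∈ E) : deltaP (K := K) a n E ≠ 0 := by
  intro hc
  have := eval_deltaP a
    (fun p : Fin n × Fin n × {l // l ∈ E} => if p.1 = p.2.1 ∧ (p.2.2 : ℤ) = 0 then 1 else 0)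
  rw [hc, map_zero, Amat_one a h0, Matrix.det_one] at this
  exact one_ne_zero this.symm

/-- Scaling the first-row variables. -/
def rsc (s : K) (z : Fin n × Fin n × {l // l ∈ E} → K) : Fin n × Fin n × {l // l ∈ E} → K :=
  fun p => if (p.1 : ℕ) = 0 then s * z p else z p

lemma prod_map_rsc (s : K) (z : Fin n × Fin n × {l // l ∈ E} → K)
    (μ : Multiset (Fin n × Fin n × {l // l ∈ E})) :
    (μ.map (rsc s z)).prod
      = s ^ (μ.countP (fun p => (p.1 : ℕ) = 0)) * (μ.map z).prod := by
  induction μ using Multiset.induction_on with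
  | empty => simp
  | cons p μ ih =>
      rw [Multiset.map_cons, Multiset.prod_cons, ih, Multiset.map_cons, Multiset.prod_cons,
        Multiset.countP_cons]
      by_cases hp : (p.1 : ℕ) = 0
      · simp only [rsc, hp, if_true, pow_succ]
        ring
      · simp only [rsc, hp, if_false, add_zero]
        ring

lemma Amat_rsc (hn : 1 ≤ n) (a : Kˣ) (s : K) (z : Fin n × Fin n × {l // l ∈ E} → K) :
    (Amat a (rsc s z)).det = s * (Amat a z).det := by
  set i0 : Fin n := ⟨0, hn⟩
  have key : Amat a (rsc s z) = Matrix.updateRow (Amat a z) i0 (s • Amat a z i0) := by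
    funext i j
    by_cases hi : (i : ℕ) = 0
    · have hii : i = i0 := Fin.ext hi
      subst hii
      simp only [Amat, rsc, Matrix.updateRow_self, Pi.smul_apply, smul_eq_mul,
        Matrix.of_apply, Finset.mul_sum, hi, if_true]
      exact Finset.sum_congr rfl fun l _ => by ring
    · have hne : i ≠ i0 := fun hc => hi (by rw [hc])
      simp only [Amat, rsc, Matrix.updateRow_ne hne, Matrix.of_apply, hi, if_false]
  rw [key, Matrix.det_updateRow_smul, Matrix.updateRow_eq_self]

lemma exists_preimage (m : Multiset (Fin n × Fin n × ℤ)) (h : ∀ p ∈ m, p.2.2 ∈ E) :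
    ∃ μ : Multiset (Fin n × Fin n × {l // l ∈ E}), μ.map (emb n E) = m := by
  induction m using Multiset.induction_on with
  | empty => exact ⟨0, rfl⟩
  | cons p m ih =>
      obtain ⟨μ, hμ⟩ := ih (fun q hq => h q (Multiset.mem_cons_of_mem hq))
      refine ⟨(p.1, p.2.1, ⟨p.2.2, h p (Multiset.mem_cons_self p m)⟩) ::ₘ μ, ?_⟩
      rw [Multiset.map_cons, hμ]
      rfl

lemma mem_symImage {ι : Type*} [Fintype ι] [DecidableEq ι] (r : ℕ) (μ : Multiset ι) :
    μ ∈ (Finset.univ.sym r).image Sym.toMultiset ↔ Multiset.card μ = r := by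
  constructor
  · rintro h
    rw [Finset.mem_image] at h
    obtain ⟨s, -, rfl⟩ := h
    exact s.2
  · intro h
    rw [Finset.mem_image]
    exact ⟨⟨μ, h⟩, Finset.mem_sym_iff.2 fun a _ => Finset.mem_univ a, rfl⟩

end SLaux

open SLaux

/-- over an infinite field, every nonzero formal *homogeneous* polynomial of
degree `r` in the coordinate functions `c_{i,j,l}` has a nonvanishing point on the
semigroup `SL̃_{n,a} = {g : det(η_a(g)) = 1}`.  Monomials are encoded as multisets `m` of
indices `(i,j,l)`; the value of such a monomial at `g` is
`∏_{(i,j,l)∈m} c_{i,j,l}(g)` (product with multiplicity), where `c_{i,j,l}(g)` is the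
coefficient of `T^l` in the `(i,j)` entry of `g`.  The sum `∑ᶠ` has only finitely many
nonzero terms. -/
theorem exists_nonvanishing_point_SL {K : Type*} [Field K] [Infinite K]
    (n : ℕ) (hn : 1 ≤ n) (a : Kˣ) (r : ℕ)
    (P : Multiset (Fin n × Fin n × ℤ) → K)
    (hP : ∃ m, P m ≠ 0)
    (hhom : ∀ m, P m ≠ 0 → Multiset.card m = r) :
    ∃ g : Matrix (Fin n) (Fin n) K[T;T⁻¹],
      (g.map fun q => evalAt a q).det = 1 ∧
      (∑ᶠ m : Multiset (Fin n × Fin n × ℤ),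
        P m * (m.map fun p => (AddMonoidAlgebra.coeff (g p.1 p.2.1)) p.2.2).prod) ≠ 0 := by
  classical
  by_contra hcon
  push_neg at hcon
  obtain ⟨m₀, hm₀⟩ := hP
  have hcard₀ : Multiset.card m₀ = r := hhom m₀ hm₀
  set E : Finset ℤ := insert 0 (m₀.map (fun p => p.2.2)).toFinset with hE
  have h0E : (0 : ℤ) ∈ E := Finset.mem_insert_self _ _
  have hm₀E : ∀ p ∈ m₀, p.2.2 ∈ E := fun p hp =>
    Finset.mem_insert_of_mem (Multiset.mem_toFinset.2 (Multiset.mem_map_of_mem _ hp))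
  -- the finite collection of monomials of degree r
  set 𝓝 : Finset (Multiset (Fin n × Fin n × {l // l ∈ E})) :=
    (Finset.univ.sym r).image Sym.toMultiset with h𝓝
  have hmem𝓝 : ∀ μ, μ ∈ 𝓝 ↔ Multiset.card μ = r := fun μ => mem_symImage r μ
  -- the polynomial V and its row-degree pieces
  set V : MvPolynomial (Fin n × Fin n × {l // l ∈ E}) K :=
    ∑ μ ∈ 𝓝, MvPolynomial.C (P (μ.map (emb n E))) * Xm μ with hV
  set Vk : ℕ → MvPolynomial (Fin n × Fin n × {l // l ∈ E}) K := fun k =>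
    ∑ μ ∈ 𝓝.filter (fun μ => μ.countP (fun p => (p.1 : ℕ) = 0) = k),
      MvPolynomial.C (P (μ.map (emb n E))) * Xm μ with hVk
  have hVsum : ∑ k ∈ Finset.range (r + 1), Vk k = V := by
    apply Finset.sum_fiberwise_of_maps_to
    intro μ hμ
    rw [Finset.mem_range]
    calc μ.countP (fun p => (p.1 : ℕ) = 0) ≤ Multiset.card μ := Multiset.countP_le_card _ _
      _ = r := (hmem𝓝 μ).1 hμ
      _ < r + 1 := Nat.lt_succ_self r
  -- evaluation formulas
  have evalV : ∀ z, MvPolynomial.eval z V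
      = ∑ μ ∈ 𝓝, P (μ.map (emb n E)) * (μ.map z).prod := by
    intro z
    rw [hV, map_sum]
    exact Finset.sum_congr rfl fun μ _ => by rw [map_mul, MvPolynomial.eval_C, eval_Xm]
  have evalVk : ∀ k z, MvPolynomial.eval z (Vk k)
      = ∑ μ ∈ 𝓝.filter (fun μ => μ.countP (fun p => (p.1 : ℕ) = 0) = k),
          P (μ.map (emb n E)) * (μ.map z).prod := by
    intro k z
    rw [hVk]
    simp only []
    rw [map_sum]
    exact Finset.sum_congr rfl fun μ _ => by rw [map_mul, MvPolynomial.eval_C, eval_Xm]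
  -- claim A : the finsum at gmat y equals the evaluation of V at y
  have claimA : ∀ y : Fin n × Fin n × {l // l ∈ E} → K,
      (∑ᶠ m : Multiset (Fin n × Fin n × ℤ),
        P m * (m.map fun p => (AddMonoidAlgebra.coeff (gmat y p.1 p.2.1)) p.2.2).prod)
      = MvPolynomial.eval y V := by
    intro y
    have hinj : ∀ x ∈ 𝓝, ∀ x' ∈ 𝓝,
        Multiset.map (emb n E) x = Multiset.map (emb n E) x' → x = x' :=
      fun x _ x' _ h => Multiset.map_injective emb_injective h
    have hsupp : (Function.support fun m : Multiset (Fin n × Fin n × ℤ) =>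
        P m * (m.map fun p => (AddMonoidAlgebra.coeff (gmat y p.1 p.2.1)) p.2.2).prod)
        ⊆ ↑(𝓝.image (Multiset.map (emb n E))) := by
      intro m hm
      simp only [Function.mem_support] at hm
      have hP' : P m ≠ 0 := fun h => hm (by rw [h, zero_mul])
      have hprod : (m.map fun p => (AddMonoidAlgebra.coeff (gmat y p.1 p.2.1)) p.2.2).prod ≠ 0 :=
        fun h => hm (by rw [h, mul_zero])
      have hall : ∀ p ∈ m, p.2.2 ∈ E := by
        intro p hp
        by_contra hpE
        apply hprod
        apply Multiset.prod_eq_zero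
        rw [Multiset.mem_map]
        refine ⟨p, hp, ?_⟩
        rw [gmat_coeff, dif_neg hpE]
      obtain ⟨μ, hμ⟩ := exists_preimage m hall
      simp only [Finset.coe_image, Set.mem_image, Finset.mem_coe]
      refine ⟨μ, ?_, hμ⟩
      rw [hmem𝓝]
      have hc := congrArg Multiset.card hμ
      rw [Multiset.card_map] at hc
      rw [hc]
      exact hhom m hP'
    rw [finsum_eq_sum_of_support_subset _ hsupp, Finset.sum_image hinj, evalV]
    refine Finset.sum_congr rfl fun μ _ => ?_
    rw [Multiset.map_map]
    congr 1
    exact congrArg _ (Multiset.map_congr rfl fun q _ => gmat_coeff_emb y q)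
  -- V is nonzero
  obtain ⟨μ₀, hμ₀⟩ := exists_preimage m₀ hm₀E
  have hμ₀card : Multiset.card μ₀ = r := by
    have hc := congrArg Multiset.card hμ₀
    rw [Multiset.card_map] at hc
    rw [hc]; exact hcard₀
  have hμ₀mem : μ₀ ∈ 𝓝 := (hmem𝓝 μ₀).2 hμ₀card
  have hVne : V ≠ 0 := by
    intro hV0
    have hcoeff : MvPolynomial.coeff μ₀.toFinsupp V = P m₀ := by
      rw [hV, MvPolynomial.coeff_sum]
      rw [Finset.sum_eq_single μ₀]
      · rw [Xm_eq_monomial, MvPolynomial.coeff_C_mul, MvPolynomial.coeff_monomial,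
          if_pos rfl, mul_one, hμ₀]
      · intro b _ hb
        rw [Xm_eq_monomial, MvPolynomial.coeff_C_mul, MvPolynomial.coeff_monomial,
          if_neg, mul_zero]
        intro hc
        exact hb (Multiset.toFinsupp.injective hc)
      · intro h
        exact absurd hμ₀mem h
    rw [hV0, MvPolynomial.coeff_zero] at hcoeff
    exact hm₀ hcoeff.symm
  -- each Vk is homogeneous of degree r
  have hVkhom : ∀ k, (Vk k).IsHomogeneous r := by
    intro k
    apply MvPolynomial.IsHomogeneous.sum
    intro μ hμ
    rw [Xm_eq_monomial, MvPolynomial.C_mul_monomial, mul_one]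
    apply MvPolynomial.isHomogeneous_monomial
    rw [degree_toFinsupp]
    exact (hmem𝓝 μ).1 (Finset.mem_filter.1 hμ).1
  -- the combined polynomial Q
  set Q : MvPolynomial (Fin n × Fin n × {l // l ∈ E}) K :=
    ∑ k ∈ Finset.range (r + 1), (deltaP a n E) ^ (r + 1 - k) * Vk k with hQ
  have hevalQ : ∀ z, MvPolynomial.eval z Q
      = ∑ k ∈ Finset.range (r + 1),
          ((Amat a z).det) ^ (r + 1 - k) * MvPolynomial.eval z (Vk k) := by
    intro z
    rw [hQ, map_sum]
    exact Finset.sum_congr rfl fun k _ => by rw [map_mul, map_pow, eval_deltaP]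
  have hQ0 : Q = 0 := by
    apply MvPolynomial.funext
    intro z
    rw [map_zero, hevalQ]
    set c : K := (Amat a z).det with hc
    by_cases hc0 : c = 0
    · apply Finset.sum_eq_zero
      intro k hk
      rw [Finset.mem_range] at hk
      rw [hc0, zero_pow (by omega), zero_mul]
    · set y := rsc c⁻¹ z with hy
      have hdet : (Amat a y).det = 1 := by
        rw [hy, Amat_rsc hn, ← hc, inv_mul_cancel₀ hc0]
      have h1 : (∑ᶠ m : Multiset (Fin n × Fin n × ℤ),
          P m * (m.map fun p => (AddMonoidAlgebra.coeff (gmat y p.1 p.2.1)) p.2.2).prod) = 0 :=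
        hcon (gmat y) (by rw [map_gmat]; exact hdet)
      rw [claimA y, evalV] at h1
      have h2 : ∑ k ∈ Finset.range (r + 1), (c⁻¹) ^ k * MvPolynomial.eval z (Vk k) = 0 := by
        rw [← h1]
        calc ∑ k ∈ Finset.range (r + 1), (c⁻¹) ^ k * MvPolynomial.eval z (Vk k)
            = ∑ k ∈ Finset.range (r + 1),
                ∑ μ ∈ 𝓝.filter (fun μ => μ.countP (fun p => (p.1 : ℕ) = 0) = k),
                  P (μ.map (emb n E)) * (μ.map y).prod := by
              refine Finset.sum_congr rfl fun k _ => ?_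
              rw [evalVk, Finset.mul_sum]
              refine Finset.sum_congr rfl fun μ hμ => ?_
              have hcount : μ.countP (fun p => (p.1 : ℕ) = 0) = k :=
                (Finset.mem_filter.1 hμ).2
              rw [hy, prod_map_rsc, hcount]
              ring
          _ = ∑ μ ∈ 𝓝, P (μ.map (emb n E)) * (μ.map y).prod := by
              apply Finset.sum_fiberwise_of_maps_to
              intro μ hμ
              rw [Finset.mem_range]
              calc μ.countP (fun p => (p.1 : ℕ) = 0) ≤ Multiset.card μ :=
                    Multiset.countP_le_card _ _
                _ = r := (hmem𝓝 μ).1 hμ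
                _ < r + 1 := Nat.lt_succ_self r
      calc ∑ k ∈ Finset.range (r + 1), c ^ (r + 1 - k) * MvPolynomial.eval z (Vk k)
          = c ^ (r + 1) * ∑ k ∈ Finset.range (r + 1),
              (c⁻¹) ^ k * MvPolynomial.eval z (Vk k) := by
            rw [Finset.mul_sum]
            refine Finset.sum_congr rfl fun k hk => ?_
            rw [Finset.mem_range] at hk
            rw [pow_sub₀ c hc0 (by omega), inv_pow]
            ring
        _ = 0 := by rw [h2, mul_zero]
  -- extract a nonzero piece
  have hex : ∃ k ∈ Finset.range (r + 1), Vk k ≠ 0 := by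
    by_contra hall
    push_neg at hall
    exact hVne (by rw [← hVsum, Finset.sum_eq_zero hall])
  obtain ⟨k₀, hk₀mem, hk₀⟩ := hex
  rw [Finset.mem_range] at hk₀mem
  have hhomterm : ∀ k, ((deltaP (K := K) a n E) ^ (r + 1 - k) * Vk k).IsHomogeneous
      (n * (r + 1 - k) + r) :=
    fun k => ((deltaP_isHomogeneous a).pow _).mul (hVkhom k)
  have hcomp := congrArg (MvPolynomial.homogeneousComponent (n * (r + 1 - k₀) + r)) hQ0
  rw [map_zero, hQ, map_sum] at hcomp
  rw [Finset.sum_eq_single k₀] at hcomp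
  · rw [MvPolynomial.homogeneousComponent_of_mem
      ((MvPolynomial.mem_homogeneousSubmodule _ _).2 (hhomterm k₀)), if_pos rfl] at hcomp
    have hdne : (deltaP (K := K) a n E) ^ (r + 1 - k₀) ≠ 0 :=
      pow_ne_zero _ (deltaP_ne_zero a h0E)
    rcases mul_eq_zero.1 hcomp with h | h
    · exact hdne h
    · exact hk₀ h
  · intro k hk hkne
    rw [MvPolynomial.homogeneousComponent_of_mem
      ((MvPolynomial.mem_homogeneousSubmodule _ _).2 (hhomterm k)), if_neg]
    rw [Finset.mem_range] at hk
    intro hDeq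
    have h1 : n * (r + 1 - k₀) = n * (r + 1 - k) := by omega
    have h2 : r + 1 - k₀ = r + 1 - k := Nat.eq_of_mul_eq_mul_left (by omega) h1
    exact hkne (by omega)
  · intro h
    exact absurd (Finset.mem_range.2 (by omega)) h

end
end

section
/- Let K be an infinite field and n, r ≥ 1. For all i, j, k, l ∈ I(ℤ,r): (i) if j and k do not lie in the same Σ̂_r-orbit of I(ℤ,r), then ξ_{i,j} ∘ ξ_{k,l} = 0; (ii) ξ_{i,i} ∘ ξ_{i,j} = ξ_{i,j} = ξ_{i,j} ∘ ξ_{j,j}. -/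
noncomputable section

namespace AffineSchur

variable (K : Type*) [Field K] (n r : ℕ)

/-- The right action of the pair `(σ,ε) ∈ Σ̂_r = Σ_r ⋉ ℤ^r` on `I(ℤ,r)`:
`i·(σ,ε) = i∘σ + n·ε`. -/
def act (σ : Equiv.Perm (Fin r)) (ε : Fin r → ℤ) (i : Fin r → ℤ) : Fin r → ℤ :=
  fun k => i (σ k) + n * ε k

/-- The tensor space `Ẽ^{⊗r}`: the free `K`-module with basis `(v_i)_{i ∈ I(ℤ,r)}`. -/
abbrev TensorSpace := (Fin r → ℤ) →₀ K

/-- The right-translation operator `T_{σ,ε} : v_i ↦ v_{i·(σ,ε)}`. -/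
def transOp (σ : Equiv.Perm (Fin r)) (ε : Fin r → ℤ) :
    Module.End K (TensorSpace K r) :=
  Finsupp.lmapDomain K K (act n r σ ε)

/-- The finite set `{k : (k,l) lies in the Σ̂_r-orbit of (i,j)}`. -/
def xiSupport (i j l : Fin r → ℤ) : Finset (Fin r → ℤ) := by
  classical
  exact (Finset.univ.filter fun σ : Equiv.Perm (Fin r) =>
      ∀ k, (n : ℤ) ∣ (l k - j (σ k))).image
    fun σ => fun k => i (σ k) + (l k - j (σ k))

/-- The operator `ξ_{i,j} ∈ End_K(Ẽ^{⊗r})` given by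
`ξ_{i,j}(v_l) = Σ_{k : (k,l) in the Σ̂_r-orbit of (i,j)} v_k`. -/
def xi (i j : Fin r → ℤ) : Module.End K (TensorSpace K r) :=
  Finsupp.lsum K fun l => LinearMap.toSpanSingleton K _
    (∑ k ∈ xiSupport n r i j l, Finsupp.single k (1 : K))

/-- The centralizer algebra `End_{KΣ̂_r}(Ẽ^{⊗r})` of all the translation operators
`T_{σ,ε}` inside `End_K(Ẽ^{⊗r})` — the affine Schur algebra `S̃(n,r)`. -/
def affineSchur : Subalgebra K (Module.End K (TensorSpace K r)) :=
  Subalgebra.centralizer K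
    (Set.range fun p : Equiv.Perm (Fin r) × (Fin r → ℤ) => transOp K n r p.1 p.2)

end AffineSchur

namespace AffineSchur

lemma mem_xiSupport {n r : ℕ} {i j l p : Fin r → ℤ} :
    p ∈ xiSupport n r i j l ↔ ∃ σ : Equiv.Perm (Fin r),
      (∀ t, (n : ℤ) ∣ l t - j (σ t)) ∧ p = fun t => i (σ t) + (l t - j (σ t)) := by
  classical
  simp [xiSupport, eq_comm]

lemma xi_single {K : Type*} [Field K] {n r : ℕ} (i j l : Fin r → ℤ) :
    xi K n r i j (Finsupp.single l 1) =
      ∑ k ∈ xiSupport n r i j l, Finsupp.single k (1 : K) := by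
  simp [xi]

lemma xiSupport_self_of_exists {n r : ℕ} {i p : Fin r → ℤ} (σ : Equiv.Perm (Fin r))
    (h : ∀ t, (n : ℤ) ∣ p t - i (σ t)) :
    xiSupport n r i i p = {p} := by
  ext q
  rw [Finset.mem_singleton, mem_xiSupport]
  constructor
  · rintro ⟨τ, -, rfl⟩
    funext t; ring
  · rintro rfl
    exact ⟨σ, h, by funext t; ring⟩

lemma xiSupport_eq_empty {n r : ℕ} {i j l : Fin r → ℤ}
    (h : ¬ ∃ σ : Equiv.Perm (Fin r), ∀ t, (n : ℤ) ∣ l t - j (σ t)) :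
    xiSupport n r i j l = ∅ := by
  rw [Finset.eq_empty_iff_forall_notMem]
  intro p hp
  obtain ⟨σ, hσ, -⟩ := mem_xiSupport.1 hp
  exact h ⟨σ, hσ⟩

/-- (i) if j and k are not in the same Σ̂_r-orbit of I(ℤ,r) then
ξ_{i,j} ∘ ξ_{k,l} = 0; (ii) ξ_{i,i} ∘ ξ_{i,j} = ξ_{i,j} = ξ_{i,j} ∘ ξ_{j,j}. -/
theorem xi_comp_xi (K : Type*) [Field K] [Infinite K]
    (n r : ℕ) (hn : 1 ≤ n) (hr : 1 ≤ r) (i j k l : Fin r → ℤ) :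
    ((¬ ∃ (σ : Equiv.Perm (Fin r)) (ε : Fin r → ℤ), k = act n r σ ε j) →
      xi K n r i j ∘ₗ xi K n r k l = 0) ∧
    xi K n r i i ∘ₗ xi K n r i j = xi K n r i j ∧
    xi K n r i j ∘ₗ xi K n r j j = xi K n r i j := by
  classical
  refine ⟨?_, ?_, ?_⟩
  · -- (i)
    intro h
    ext m : 2
    simp only [LinearMap.comp_apply, LinearMap.zero_apply, Finsupp.lsingle_apply]
    rw [xi_single, map_sum]
    refine Finset.sum_eq_zero fun p hp => ?_
    obtain ⟨σ', hσ', hpe⟩ := mem_xiSupport.1 hp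
    rw [xi_single]
    have hemp : xiSupport n r i j p = ∅ := by
      refine xiSupport_eq_empty ?_
      rintro ⟨σ, hσ⟩
      have hd : ∀ s, (n : ℤ) ∣ k s - j ((σ'.symm.trans σ) s) := by
        intro s
        have h1 := hσ (σ'.symm s)
        have h2 := hσ' (σ'.symm s)
        have hps : p (σ'.symm s) = k s + (m (σ'.symm s) - l (σ' (σ'.symm s))) := by
          rw [hpe]; simp
        have heq : k s - j ((σ'.symm.trans σ) s) =
            (p (σ'.symm s) - j (σ (σ'.symm s))) -
              (m (σ'.symm s) - l (σ' (σ'.symm s))) := by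
          rw [hps, Equiv.trans_apply]; ring
        rw [heq]
        exact dvd_sub h1 h2
      refine h ⟨σ'.symm.trans σ,
        fun s => (k s - j ((σ'.symm.trans σ) s)) / n, funext fun s => ?_⟩
      have hc := Int.mul_ediv_cancel' (hd s)
      simp only [act]
      rw [hc]; ring
    rw [hemp, Finset.sum_empty]
  · -- (ii) first
    ext m : 2
    simp only [LinearMap.comp_apply, Finsupp.lsingle_apply]
    rw [xi_single, map_sum]
    refine Finset.sum_congr rfl fun p hp => ?_
    obtain ⟨σ, hσ, hpe⟩ := mem_xiSupport.1 hp
    rw [xi_single, xiSupport_self_of_exists σ (fun t => ?_), Finset.sum_singleton]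
    rw [hpe]
    simpa using hσ t
  · -- (ii) second
    ext m : 2
    simp only [LinearMap.comp_apply, Finsupp.lsingle_apply]
    by_cases hc : ∃ σ : Equiv.Perm (Fin r), ∀ t, (n : ℤ) ∣ m t - j (σ t)
    · obtain ⟨σ, hσ⟩ := hc
      rw [xi_single, xiSupport_self_of_exists σ hσ, Finset.sum_singleton]
    · rw [xi_single, xiSupport_eq_empty hc, Finset.sum_empty, map_zero,
        xi_single (K := K) i j m, xiSupport_eq_empty hc, Finset.sum_empty]

end AffineSchur
end
end

section
/- Let K be an infinite field and n, r ≥ 1. Let I(n,r) ⊆ I(ℤ,r) be the set of r-tuples with entries in {1,…,n}, and let R ⊆ I(n,r) be a set containing exactly one element of each orbit of the place-permutation action of Σ_r on I(n,r) (equivalently, exactly one element of each Σ̂_r-orbit of I(ℤ,r)); R is finite. Then the family (ξ_{i,i})_{i∈R} is a decomposition of the identity into orthogonal idempotents: ξ_{i,i} ∘ ξ_{i,i} = ξ_{i,i} for every i ∈ R, ξ_{i,i} ∘ ξ_{j,j} = 0 for distinct i, j ∈ R, and Σ_{i∈R} ξ_{i,i} = id on Ẽ^{⊗r}. -/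
noncomputable section

namespace AffineSchur

open Classical in
lemma xiSupport_diag (n r : ℕ) (i l : Fin r → ℤ) :
    xiSupport n r i i l =
      if ∃ σ : Equiv.Perm (Fin r), ∀ k, (n:ℤ) ∣ (l k - i (σ k)) then {l} else ∅ := by
  classical
  unfold xiSupport
  split_ifs with h
  · obtain ⟨σ, hσ⟩ := h
    apply Finset.Subset.antisymm
    · intro x hx
      simp only [Finset.mem_image, Finset.mem_filter] at hx
      obtain ⟨τ, _, rfl⟩ := hx
      simp only [Finset.mem_singleton]
      funext k; ring
    · intro x hx
      simp only [Finset.mem_singleton] at hx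
      subst hx
      simp only [Finset.mem_image, Finset.mem_filter]
      exact ⟨σ, ⟨Finset.mem_univ _, hσ⟩, by funext k; ring⟩
  · rw [Finset.filter_eq_empty_iff.2 (fun σ _ hσ => h ⟨σ, hσ⟩), Finset.image_empty]

open Classical in
lemma xi_diag_single (K : Type*) [Field K] (n r : ℕ) (i l : Fin r → ℤ) (c : K) :
    xi K n r i i (Finsupp.single l c) =
      if ∃ σ : Equiv.Perm (Fin r), ∀ k, (n:ℤ) ∣ (l k - i (σ k))
      then Finsupp.single l c else 0 := by
  classical
  simp only [xi, Finsupp.lsum_single, LinearMap.toSpanSingleton_apply, xiSupport_diag]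
  split_ifs with h
  · simp [Finsupp.smul_single]
  · simp

/-- The canonical representative with entries in `[1,n]` of `l` modulo `n`. -/
def res (n r : ℕ) (l : Fin r → ℤ) : Fin r → ℤ := fun k => (l k - 1) % (n:ℤ) + 1

lemma res_bounds (n r : ℕ) (hn : 1 ≤ n) (l : Fin r → ℤ) :
    ∀ k, 1 ≤ res n r l k ∧ res n r l k ≤ (n:ℤ) := by
  intro k
  have hpos : (0:ℤ) < n := by exact_mod_cast hn
  have h1 := Int.emod_nonneg (l k - 1) (by positivity : (n:ℤ) ≠ 0)
  have h2 := Int.emod_lt_of_pos (l k - 1) hpos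
  unfold res; omega

lemma res_dvd (n r : ℕ) (l : Fin r → ℤ) (k : Fin r) : (n:ℤ) ∣ l k - res n r l k := by
  have h : l k - res n r l k = (l k - 1) - (l k - 1) % n := by unfold res; ring
  rw [h]
  exact Int.dvd_self_sub_of_emod_eq rfl

lemma P_iff (n r : ℕ) (hn : 1 ≤ n) (i l : Fin r → ℤ)
    (hi : ∀ k, 1 ≤ i k ∧ i k ≤ (n:ℤ)) :
    (∃ σ : Equiv.Perm (Fin r), ∀ k, (n:ℤ) ∣ (l k - i (σ k))) ↔
    ∃ σ : Equiv.Perm (Fin r), i = res n r l ∘ σ := by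
  constructor
  · rintro ⟨σ, hσ⟩
    refine ⟨σ⁻¹, funext fun t => ?_⟩
    have key : ∀ k, i (σ k) = res n r l k := by
      intro k
      have hd : (n:ℤ) ∣ res n r l k - i (σ k) := by
        have h := dvd_sub (hσ k) (res_dvd n r l k)
        have e : l k - i (σ k) - (l k - res n r l k) = res n r l k - i (σ k) := by ring
        rwa [e] at h
      have hb1 := res_bounds n r hn l k
      have hb2 := hi (σ k)
      have : res n r l k - i (σ k) = 0 :=
        Int.eq_zero_of_abs_lt_dvd hd (abs_lt.2 ⟨by omega, by omega⟩)
      omega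
    have := key (σ⁻¹ t)
    simpa using this
  · rintro ⟨σ, hσ⟩
    refine ⟨σ⁻¹, fun k => ?_⟩
    have : i (σ⁻¹ k) = res n r l k := by rw [hσ]; simp
    rw [this]
    exact res_dvd n r l k

/-- if R ⊆ I(n,r) is a (finite) set containing exactly one element of each
orbit of the place-permutation action of Σ_r on I(n,r), then (ξ_{i,i})_{i∈R} is a
decomposition of the identity of End_K(Ẽ^{⊗r}) into orthogonal idempotents. -/
theorem xi_orthogonal_idempotents (K : Type*) [Field K] [Infinite K]
    (n r : ℕ) (hn : 1 ≤ n) (hr : 1 ≤ r)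
    (R : Finset (Fin r → ℤ))
    (hRmem : ∀ i ∈ R, ∀ k, 1 ≤ i k ∧ i k ≤ (n : ℤ))
    (hRrep : ∀ j : Fin r → ℤ, (∀ k, 1 ≤ j k ∧ j k ≤ (n : ℤ)) →
      ∃! i, i ∈ R ∧ ∃ σ : Equiv.Perm (Fin r), i = j ∘ σ) :
    (∀ i ∈ R, xi K n r i i ∘ₗ xi K n r i i = xi K n r i i) ∧
    (∀ i ∈ R, ∀ j ∈ R, i ≠ j → xi K n r i i ∘ₗ xi K n r j j = 0) ∧
    (∑ i ∈ R, xi K n r i i) = LinearMap.id := by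
  classical
  refine ⟨?_, ?_, ?_⟩
  · intro i _
    apply Finsupp.lhom_ext
    intro l c
    rw [LinearMap.comp_apply, xi_diag_single]
    split_ifs with h
    · rw [xi_diag_single, if_pos h]
    · simp
  · intro i hi j hj hij
    apply Finsupp.lhom_ext
    intro l c
    rw [LinearMap.comp_apply, xi_diag_single]
    split_ifs with h
    · rw [xi_diag_single, if_neg, LinearMap.zero_apply]
      intro h'
      have hji := (P_iff n r hn j l (hRmem j hj)).1 h
      have hii := (P_iff n r hn i l (hRmem i hi)).1 h'
      obtain ⟨i0, _, huniq⟩ := hRrep (res n r l) (res_bounds n r hn l)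
      exact hij ((huniq i ⟨hi, hii⟩).trans (huniq j ⟨hj, hji⟩).symm)
    · simp
  · apply Finsupp.lhom_ext
    intro l c
    rw [LinearMap.id_apply, LinearMap.sum_apply]
    obtain ⟨i0, ⟨hi0R, hi0⟩, huniq⟩ := hRrep (res n r l) (res_bounds n r hn l)
    rw [Finset.sum_eq_single_of_mem i0 hi0R]
    · rw [xi_diag_single, if_pos ((P_iff n r hn i0 l (hRmem i0 hi0R)).2 hi0)]
    · intro i hiR hne
      rw [xi_diag_single, if_neg]
      intro h
      exact hne (huniq i ⟨hiR, (P_iff n r hn i l (hRmem i hiR)).1 h⟩)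

end AffineSchur
end
end

section
/- Let K be an infinite field and n, r ≥ 1. There exists an injective unital K-algebra homomorphism Φ : End_{KΣ_r}(E^{⊗r}) → End_K(Ẽ^{⊗r}) such that Φ(ξ^fin_{i,j}) = ξ_{i,j} for all i, j ∈ I(n,r); its image is the K-linear span of {ξ_{i,j} : i, j ∈ I(n,r)}, and this image is contained in the centralizer algebra End_{KΣ̂_r}(Ẽ^{⊗r}). (Thus the Schur algebra S(n,r) embeds naturally into the affine Schur algebra S̃(n,r).) -/
noncomputable section

namespace AffineSchur

variable (K : Type*) [Field K] (n r : ℕ)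

/-- `I(n,r)`: the set of r-tuples with entries in `{1,…,n}`, as a subtype of `I(ℤ,r)`. -/
def FinIdx (n r : ℕ) := {i : Fin r → ℤ // ∀ k, 1 ≤ i k ∧ i k ≤ (n : ℤ)}

/-- The tensor space `E^{⊗r}`: the free `K`-module with basis indexed by `I(n,r)`. -/
abbrev FinTensorSpace := (FinIdx n r) →₀ K

/-- The place-permutation operator `v_i ↦ v_{i∘σ}` on `E^{⊗r}`. -/
def permOpFin (σ : Equiv.Perm (Fin r)) : Module.End K (FinTensorSpace K n r) :=
  Finsupp.lmapDomain K K
    (fun i : FinIdx n r => (⟨fun k => i.1 (σ k), fun k => i.2 (σ k)⟩ : FinIdx n r))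

/-- The finite set `{k : (k,l) lies in the Σ_r-orbit of (i,j)}` inside `I(n,r)`. -/
def xiFinSupport (i j l : FinIdx n r) : Finset (FinIdx n r) := by
  classical
  exact (Finset.univ.filter fun σ : Equiv.Perm (Fin r) =>
      (fun k => j.1 (σ k)) = l.1).image
    fun σ => (⟨fun k => i.1 (σ k), fun k => i.2 (σ k)⟩ : FinIdx n r)

/-- The operator `ξ^fin_{i,j} ∈ End_K(E^{⊗r})` given by
`ξ^fin_{i,j}(v_l) = Σ_{k : (k,l) in the Σ_r-orbit of (i,j)} v_k`. -/
def xiFin (i j : FinIdx n r) : Module.End K (FinTensorSpace K n r) :=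
  Finsupp.lsum K fun l => LinearMap.toSpanSingleton K _
    (∑ k ∈ xiFinSupport n r i j l, Finsupp.single k (1 : K))

/-- The Schur algebra `S(n,r) = End_{KΣ_r}(E^{⊗r})`: the centralizer of the
place-permutation operators inside `End_K(E^{⊗r})`. -/
def schurAlgebra : Subalgebra K (Module.End K (FinTensorSpace K n r)) :=
  Subalgebra.centralizer K (Set.range fun σ : Equiv.Perm (Fin r) => permOpFin K n r σ)

section Aux
variable {n r}

def red (n : ℕ) (l : Fin r → ℤ) : Fin r → ℤ := fun k => (l k - 1) % (n : ℤ) + 1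
def quo (n : ℕ) (l : Fin r → ℤ) : Fin r → ℤ := fun k => (l k - 1) / (n : ℤ)

lemma red_add_quo (n : ℕ) (l : Fin r → ℤ) (k : Fin r) :
    red n l k + (n : ℤ) * quo n l k = l k := by
  have := Int.emod_add_mul_ediv (l k - 1) (n : ℤ)
  simp only [red, quo]; linarith

lemma red_mem (hn : 0 < n) (l : Fin r → ℤ) (k : Fin r) :
    1 ≤ red n l k ∧ red n l k ≤ (n : ℤ) := by
  have hn' : (0:ℤ) < (n:ℤ) := by exact_mod_cast hn
  have h1 := Int.emod_nonneg (l k - 1) hn'.ne'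
  have h2 := Int.emod_lt_of_pos (l k - 1) hn'
  simp only [red]; omega

def redIdx (hn : 0 < n) (l : Fin r → ℤ) : FinIdx n r := ⟨red n l, red_mem hn l⟩

lemma red_shift (hn : 0 < n) (j : FinIdx n r) (ε : Fin r → ℤ) :
    red n (fun m => j.1 m + (n:ℤ) * ε m) = j.1 := by
  funext k
  have hj := j.2 k
  have hn' : (0:ℤ) < (n:ℤ) := by exact_mod_cast hn
  simp only [red]
  have h : (j.1 k + (n:ℤ) * ε k - 1) = (j.1 k - 1) + (n:ℤ) * ε k := by ring
  rw [h, Int.add_mul_emod_self_left, Int.emod_eq_of_lt (by omega) (by omega)]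
  omega

lemma quo_shift (hn : 0 < n) (j : FinIdx n r) (ε : Fin r → ℤ) :
    quo n (fun m => j.1 m + (n:ℤ) * ε m) = ε := by
  funext k
  have hj := j.2 k
  have hn' : (0:ℤ) < (n:ℤ) := by exact_mod_cast hn
  simp only [quo]
  have h : (j.1 k + (n:ℤ) * ε k - 1) = (j.1 k - 1) + (n:ℤ) * ε k := by ring
  rw [h, Int.add_mul_ediv_left _ _ hn'.ne', Int.ediv_eq_zero_of_lt (by omega) (by omega)]
  ring

lemma redIdx_shift (hn : 0 < n) (j : FinIdx n r) (ε : Fin r → ℤ) :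
    redIdx hn (fun m => j.1 m + (n:ℤ) * ε m) = j := Subtype.ext (red_shift hn j ε)

lemma red_idx (hn : 0 < n) (j : FinIdx n r) : redIdx hn j.1 = j := by
  have := redIdx_shift hn j 0
  simpa using this

lemma quo_idx (hn : 0 < n) (j : FinIdx n r) : quo n j.1 = 0 := by
  have := quo_shift hn j 0
  simpa using this

end Aux
section Emb
variable {n r}

def pushMap (ε : Fin r → ℤ) : FinTensorSpace K n r →ₗ[K] TensorSpace K r :=
  Finsupp.lmapDomain K K (fun k : FinIdx n r => fun m => k.1 m + (n:ℤ) * ε m)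

lemma pushMap_single (ε : Fin r → ℤ) (k : FinIdx n r) (c : K) :
    pushMap K ε (Finsupp.single k c)
      = Finsupp.single (fun m => k.1 m + (n:ℤ) * ε m) c := by
  simp [pushMap, Finsupp.lmapDomain_apply, Finsupp.mapDomain_single]

lemma pushMap_injective (ε : Fin r → ℤ) : Function.Injective (pushMap K (n := n) ε) := by
  apply Finsupp.mapDomain_injective
  intro a b h
  apply Subtype.ext; funext m
  have := congrFun h m
  simpa using this

def phi (hn : 0 < n) :
    Module.End K (FinTensorSpace K n r) →ₗ[K] Module.End K (TensorSpace K r) where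
  toFun f := Finsupp.lsum K fun l =>
    pushMap K (quo n l) ∘ₗ f ∘ₗ Finsupp.lsingle (redIdx hn l)
  map_add' f g := by
    apply Finsupp.lhom_ext; intro l c
    simp [Finsupp.lsum_single]
  map_smul' a f := by
    apply Finsupp.lhom_ext; intro l c
    simp [Finsupp.lsum_single]

lemma phi_single (hn : 0 < n) (f : Module.End K (FinTensorSpace K n r))
    (l : Fin r → ℤ) (c : K) :
    phi K hn f (Finsupp.single l c)
      = pushMap K (quo n l) (f (Finsupp.single (redIdx hn l) c)) := by
  simp [phi, Finsupp.lsum_single]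

lemma phi_push (hn : 0 < n) (f : Module.End K (FinTensorSpace K n r))
    (ε : Fin r → ℤ) (x : FinTensorSpace K n r) :
    phi K hn f (pushMap K ε x) = pushMap K ε (f x) := by
  have : (phi K hn f) ∘ₗ pushMap K ε = pushMap K ε ∘ₗ f := by
    apply Finsupp.lhom_ext; intro k c
    simp only [LinearMap.comp_apply, pushMap_single, phi_single,
      redIdx_shift hn k ε, quo_shift hn k ε]
  exact congrFun (congrArg DFunLike.coe this) x

def phi0 (hn : 0 < n) :
    Module.End K (FinTensorSpace K n r) →ₐ[K] Module.End K (TensorSpace K r) :=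
  AlgHom.ofLinearMap (phi K hn)
    (by
      apply Finsupp.lhom_ext; intro l c
      rw [Module.End.one_apply, phi_single, Module.End.one_apply, pushMap_single]
      congr 1
      funext m
      exact red_add_quo n l m)
    (by
      intro f g
      apply Finsupp.lhom_ext; intro l c
      simp only [Module.End.mul_apply, phi_single, phi_push])

lemma phi0_injective (hn : 0 < n) : Function.Injective (phi0 K (n := n) (r := r) hn) := by
  intro f g h
  apply Finsupp.lhom_ext
  intro j c
  have h1 : phi K hn f (Finsupp.single j.1 c) = phi K hn g (Finsupp.single j.1 c) := by
    have : ⇑(phi0 K hn f) = ⇑(phi0 K hn g) := by rw [h]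
    exact congrFun this _
  rw [phi_single, phi_single, red_idx hn j, quo_idx hn j] at h1
  exact pushMap_injective K 0 h1

end Emb


section XiCompat
variable {n r}

lemma xiSupport_filter (hn : 0 < n) (j : FinIdx n r) (l : Fin r → ℤ)
    (σ : Equiv.Perm (Fin r)) :
    (∀ k, (n : ℤ) ∣ (l k - j.1 (σ k))) ↔ (fun k => j.1 (σ k)) = red n l := by
  constructor
  · intro h; funext k
    have h1 := h k
    have h2 : (n:ℤ) ∣ l k - red n l k :=
      ⟨quo n l k, by have := red_add_quo n l k; linarith⟩
    have h3 : (n:ℤ) ∣ red n l k - j.1 (σ k) := by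
      have := dvd_sub h1 h2
      have he : (l k - j.1 (σ k)) - (l k - red n l k) = red n l k - j.1 (σ k) := by ring
      rwa [he] at this
    have hb1 := j.2 (σ k)
    have hb2 := red_mem hn l k
    have h0 := Int.eq_zero_of_abs_lt_dvd h3 (abs_lt.mpr ⟨by omega, by omega⟩)
    omega
  · intro h k
    have h1 : j.1 (σ k) = red n l k := congrFun h k
    exact ⟨quo n l k, by have := red_add_quo n l k; linarith⟩

lemma mem_xiFinSupport_iff (i j l k : FinIdx n r) :
    k ∈ xiFinSupport n r i j l ↔ ∃ σ : Equiv.Perm (Fin r),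
      (fun k => j.1 (σ k)) = l.1 ∧
        (⟨fun k => i.1 (σ k), fun k => i.2 (σ k)⟩ : FinIdx n r) = k := by
  classical
  exact Finset.mem_image.trans (exists_congr fun σ =>
    and_congr_left' (Finset.mem_filter.trans (and_iff_right (Finset.mem_univ _))))

lemma xiSupport_eq (hn : 0 < n) (i j : FinIdx n r) (l : Fin r → ℤ) :
    xiSupport n r i.1 j.1 l =
      (xiFinSupport n r i j (redIdx hn l)).image
        (fun k : FinIdx n r => fun m => k.1 m + (n:ℤ) * quo n l m) := by
  classical
  ext x
  simp only [xiSupport, mem_xiFinSupport_iff, Finset.mem_image, Finset.mem_filter,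
    Finset.mem_univ, true_and]
  constructor
  · rintro ⟨σ, hσ, rfl⟩
    have hred := (xiSupport_filter hn j l σ).mp hσ
    refine ⟨⟨fun k => i.1 (σ k), fun k => i.2 (σ k)⟩, ⟨σ, hred, rfl⟩, ?_⟩
    funext m
    have h1 : j.1 (σ m) = red n l m := congrFun hred m
    have h2 := red_add_quo n l m
    show i.1 (σ m) + (n:ℤ) * quo n l m = i.1 (σ m) + (l m - j.1 (σ m))
    linarith
  · rintro ⟨k, ⟨σ, hσ, rfl⟩, rfl⟩
    refine ⟨σ, (xiSupport_filter hn j l σ).mpr hσ, ?_⟩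
    funext m
    have h1 : j.1 (σ m) = red n l m := congrFun hσ m
    have h2 := red_add_quo n l m
    show i.1 (σ m) + (l m - j.1 (σ m)) = i.1 (σ m) + (n:ℤ) * quo n l m
    linarith

lemma phi0_xiFin (hn : 0 < n) (i j : FinIdx n r) :
    phi0 K hn (xiFin K n r i j) = xi K n r i.1 j.1 := by
  apply Finsupp.lhom_ext; intro l c
  show (phi K hn) (xiFin K n r i j) (Finsupp.single l c)
    = (xi K n r i.1 j.1) (Finsupp.single l c)
  rw [phi_single]
  simp only [xiFin, xi, Finsupp.lsum_single, LinearMap.toSpanSingleton_apply]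
  rw [map_smul, map_sum]
  simp only [pushMap_single]
  rw [xiSupport_eq hn i j l, Finset.sum_image]
  intro a _ b _ h
  apply Subtype.ext; funext m
  have := congrFun h m
  simp only [] at this
  linarith

end XiCompat



section Centralizer
variable {n r}

instance : DecidableEq (FinIdx n r) :=
  fun a b => decidable_of_iff (a.1 = b.1) Subtype.ext_iff.symm

lemma transOp_single (σ : Equiv.Perm (Fin r)) (ε : Fin r → ℤ) (m : Fin r → ℤ) (c : K) :
    transOp K n r σ ε (Finsupp.single m c) = Finsupp.single (act n r σ ε m) c := by
  simp [transOp, Finsupp.lmapDomain_apply, Finsupp.mapDomain_single]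

lemma permOpFin_single (σ : Equiv.Perm (Fin r)) (m : FinIdx n r) (c : K) :
    permOpFin K n r σ (Finsupp.single m c)
      = Finsupp.single (⟨fun k => m.1 (σ k), fun k => m.2 (σ k)⟩ : FinIdx n r) c := by
  exact Finsupp.mapDomain_single

lemma xiSupport_act (i j : Fin r → ℤ) (σ : Equiv.Perm (Fin r)) (ε : Fin r → ℤ)
    (l : Fin r → ℤ) :
    xiSupport n r i j (act n r σ ε l) = (xiSupport n r i j l).image (act n r σ ε) := by
  classical
  ext x
  simp only [xiSupport, Finset.mem_image, Finset.mem_filter, Finset.mem_univ, true_and]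
  simp only [act]
  constructor
  · rintro ⟨π, hπ, rfl⟩
    refine ⟨fun k => i (π (σ.symm k)) + (l k - j (π (σ.symm k))),
      ⟨σ.symm.trans π, ?_, rfl⟩, ?_⟩
    · intro k
      obtain ⟨t, ht⟩ := hπ (σ.symm k)
      have ht' : l k + (n:ℤ) * ε (σ.symm k) - j (π (σ.symm k)) = (n:ℤ) * t := by
        simpa using ht
      exact ⟨t - ε (σ.symm k), by simp only [Equiv.trans_apply]; linear_combination ht'⟩
    · funext k
      simp only [act, Equiv.trans_apply, Equiv.symm_apply_apply]
      ring
  · rintro ⟨y, ⟨π, hπ, rfl⟩, rfl⟩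
    refine ⟨σ.trans π, ?_, ?_⟩
    · intro k
      obtain ⟨t, ht⟩ := hπ (σ k)
      exact ⟨t + ε k, by simp only [Equiv.trans_apply]; linear_combination ht⟩
    · funext k
      simp only [act, Equiv.trans_apply]
      ring

lemma xi_mem_affine (i j : Fin r → ℤ) : xi K n r i j ∈ affineSchur K n r := by
  rw [affineSchur, Subalgebra.mem_centralizer_iff]
  rintro g ⟨⟨σ, ε⟩, rfl⟩
  apply Finsupp.lhom_ext; intro l c
  rw [Module.End.mul_apply, Module.End.mul_apply]
  simp only [xi, Finsupp.lsum_single, LinearMap.toSpanSingleton_apply, transOp_single,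
    map_smul, map_sum]
  rw [xiSupport_act, Finset.sum_image]
  intro a _ b _ h
  funext m
  have := congrFun h (σ.symm m)
  simp only [act, Equiv.apply_symm_apply] at this
  linarith

lemma xiFinSupport_perm (i j : FinIdx n r) (σ : Equiv.Perm (Fin r)) (l : FinIdx n r) :
    xiFinSupport n r i j ⟨fun k => l.1 (σ k), fun k => l.2 (σ k)⟩
      = (xiFinSupport n r i j l).image
          (fun m : FinIdx n r => ⟨fun k => m.1 (σ k), fun k => m.2 (σ k)⟩) := by
  classical
  ext x
  refine (mem_xiFinSupport_iff _ _ _ _).trans (Iff.trans ?_ (Iff.symm (Finset.mem_image.trans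
    (exists_congr fun a => and_congr_left' (mem_xiFinSupport_iff _ _ _ _)))))
  constructor
  · rintro ⟨π, hπ, rfl⟩
    refine ⟨⟨fun k => i.1 ((σ.symm.trans π) k), fun k => i.2 ((σ.symm.trans π) k)⟩,
      ⟨σ.symm.trans π, ?_, rfl⟩, ?_⟩
    · funext k
      have := congrFun hπ (σ.symm k)
      simpa [Equiv.trans_apply] using this
    · apply Subtype.ext; funext k
      simp [Equiv.trans_apply]
  · rintro ⟨m, ⟨π, hπ, rfl⟩, rfl⟩
    refine ⟨σ.trans π, ?_, ?_⟩
    · funext k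
      exact congrFun hπ (σ k)
    · apply Subtype.ext; funext k
      simp [Equiv.trans_apply]

lemma xiFin_mem_schur (i j : FinIdx n r) : xiFin K n r i j ∈ schurAlgebra K n r := by
  rw [schurAlgebra, Subalgebra.mem_centralizer_iff]
  rintro g ⟨σ, rfl⟩
  apply Finsupp.lhom_ext; intro l c
  rw [Module.End.mul_apply, Module.End.mul_apply]
  simp only [xiFin, Finsupp.lsum_single, LinearMap.toSpanSingleton_apply, permOpFin_single,
    map_smul, map_sum]
  refine Eq.symm ((Finsupp.lsum_single ..).trans ?_)
  refine (LinearMap.toSpanSingleton_apply ..).trans (congrArg (c • ·) ?_)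
  refine (congrArg (fun s => ∑ k ∈ s, Finsupp.single k (1 : K))
    (xiFinSupport_perm i j σ l)).trans (Finset.sum_image ?_)
  intro a _ b _ h
  apply Subtype.ext; funext m
  have := congrFun (congrArg Subtype.val h) (σ.symm m)
  simpa using this

end Centralizer


section Span
variable {n r}

instance : Fintype (FinIdx n r) :=
  Fintype.ofInjective (fun i : FinIdx n r => fun k : Fin r =>
      (⟨(i.1 k - 1).toNat, by have := i.2 k; omega⟩ : Fin n))
    (by
      intro a b h
      apply Subtype.ext; funext k
      have := congrFun h k
      have h1 := a.2 k
      have h2 := b.2 k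
      simp only [Fin.mk.injEq] at this
      omega)

/-- diagonal action of a permutation on a pair of indices -/
def permPair (σ : Equiv.Perm (Fin r)) (p : FinIdx n r × FinIdx n r) :
    FinIdx n r × FinIdx n r :=
  (⟨fun k => p.1.1 (σ k), fun k => p.1.2 (σ k)⟩,
   ⟨fun k => p.2.1 (σ k), fun k => p.2.2 (σ k)⟩)

lemma permPair_permPair (σ τ : Equiv.Perm (Fin r)) (p : FinIdx n r × FinIdx n r) :
    permPair τ (permPair σ p) = permPair (τ.trans σ) p := rfl

def pairSetoid (n r : ℕ) : Setoid (FinIdx n r × FinIdx n r) where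
  r p q := ∃ σ, permPair σ p = q
  iseqv := by
    constructor
    · intro p
      exact ⟨1, rfl⟩
    · rintro p q ⟨σ, rfl⟩
      refine ⟨σ.symm, ?_⟩
      rw [permPair_permPair]
      apply Prod.ext <;> (apply Subtype.ext; funext k) <;>
        simp [permPair, Equiv.trans_apply]
    · rintro p q t ⟨σ, rfl⟩ ⟨τ, rfl⟩
      exact ⟨τ.trans σ, rfl⟩

def rep (p : FinIdx n r × FinIdx n r) : FinIdx n r × FinIdx n r :=
  (Quotient.mk (pairSetoid n r) p).out

lemma rep_spec (p : FinIdx n r × FinIdx n r) : ∃ σ, permPair σ (rep p) = p := by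
  have h : Quotient.mk (pairSetoid n r) (rep p) = Quotient.mk (pairSetoid n r) p :=
    Quotient.out_eq _
  exact Quotient.exact h

lemma rep_eq_of_rel {p q : FinIdx n r × FinIdx n r} (h : ∃ σ, permPair σ p = q) :
    rep p = rep q := by
  unfold rep
  congr 1
  exact Quotient.sound h

lemma rep_rep (p : FinIdx n r × FinIdx n r) : rep (rep p) = rep p :=
  rep_eq_of_rel (rep_spec p)

lemma mem_xiFinSupport (i j l k : FinIdx n r) :
    k ∈ xiFinSupport n r i j l ↔ ∃ σ, permPair σ (i, j) = (k, l) := by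
  classical
  simp only [mem_xiFinSupport_iff, Finset.mem_image, Finset.mem_filter, Finset.mem_univ, true_and]
  constructor
  · rintro ⟨σ, hσ, rfl⟩
    exact ⟨σ, Prod.ext_iff.mpr ⟨rfl, Subtype.ext hσ⟩⟩
  · rintro ⟨σ, h⟩
    obtain ⟨h1, h2⟩ := Prod.ext_iff.mp h
    exact ⟨σ, congrArg Subtype.val h2, h1⟩

lemma schur_spanned {f : Module.End K (FinTensorSpace K n r)}
    (hf : f ∈ schurAlgebra K n r) :
    f ∈ Submodule.span K
      {g : Module.End K (FinTensorSpace K n r) |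
        ∃ i j : FinIdx n r, g = xiFin K n r i j} := by
  classical
  set c : FinIdx n r × FinIdx n r → K :=
    fun p => (f (Finsupp.single p.2 1)) p.1 with hc
  have hinv : ∀ (σ : Equiv.Perm (Fin r)) (p : FinIdx n r × FinIdx n r),
      c (permPair σ p) = c p := by
    intro σ p
    have hcomm : permOpFin K n r σ * f = f * permOpFin K n r σ :=
      (Subalgebra.mem_centralizer_iff K).mp hf _ ⟨σ, rfl⟩
    have happ : permOpFin K n r σ (f (Finsupp.single p.2 1))
        = f (Finsupp.single (permPair σ p).2 1) := by
      have h := congrFun (congrArg DFunLike.coe hcomm) (Finsupp.single p.2 1)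
      rw [Module.End.mul_apply, Module.End.mul_apply, permOpFin_single] at h
      exact h
    have hval : (permOpFin K n r σ (f (Finsupp.single p.2 1))) (permPair σ p).1
        = (f (Finsupp.single p.2 1)) p.1 := by
      exact Finsupp.mapDomain_apply
        (by
          intro a b h
          apply Subtype.ext; funext m
          have := congrFun (congrArg Subtype.val h) (σ.symm m)
          simpa using this) _ p.1
    calc c (permPair σ p)
        = (f (Finsupp.single (permPair σ p).2 1)) (permPair σ p).1 := rfl
      _ = (permOpFin K n r σ (f (Finsupp.single p.2 1))) (permPair σ p).1 := by rw [happ]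
      _ = (f (Finsupp.single p.2 1)) p.1 := hval
      _ = c p := rfl
  set reps : Finset (FinIdx n r × FinIdx n r) :=
    Finset.univ.image (rep (n := n) (r := r)) with hreps
  have hmain : f = ∑ p ∈ reps, c p • xiFin K n r p.1 p.2 := by
    apply Finsupp.lhom_ext
    intro l b
    have hs : (Finsupp.single l b : FinTensorSpace K n r)
        = b • Finsupp.single l 1 := by
      rw [Finsupp.smul_single, smul_eq_mul, mul_one]
    rw [hs, map_smul, map_smul]
    congr 1
    ext k
    have hrhs : ((∑ p ∈ reps, c p • xiFin K n r p.1 p.2) (Finsupp.single l 1)) k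
        = ∑ p ∈ reps, (if k ∈ xiFinSupport n r p.1 p.2 l then c p else 0) := by
      rw [LinearMap.sum_apply, Finsupp.finset_sum_apply]
      apply Finset.sum_congr rfl
      intro p _
      rw [LinearMap.smul_apply, Finsupp.smul_apply]
      simp only [xiFin, Finsupp.lsum_single, LinearMap.toSpanSingleton_apply, one_smul]
      rw [Finsupp.finset_sum_apply]
      simp only [Finsupp.single_apply]
      rw [Finset.sum_ite_eq']
      split <;> simp
    rw [hrhs]
    have hiff : ∀ p ∈ reps, (k ∈ xiFinSupport n r p.1 p.2 l ↔ p = rep (k, l)) := by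
      intro p hp
      obtain ⟨q, -, rfl⟩ := Finset.mem_image.mp hp
      rw [mem_xiFinSupport]
      constructor
      · intro hex
        rw [← rep_rep q]
        exact rep_eq_of_rel hex
      · intro h
        rw [h]
        exact rep_spec (k, l)
    have hsum : ∑ p ∈ reps, (if k ∈ xiFinSupport n r p.1 p.2 l then c p else 0)
        = ∑ p ∈ reps, (if p = rep (k, l) then c p else 0) := by
      apply Finset.sum_congr rfl
      intro p hp
      rw [if_congr (hiff p hp) rfl rfl]
    rw [hsum, Finset.sum_ite_eq' reps (rep (k, l)) c,
      if_pos (Finset.mem_image_of_mem _ (Finset.mem_univ _))]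
    obtain ⟨σ, hσ⟩ := rep_spec (k, l)
    have h2 : c (permPair σ (rep (k, l))) = c (rep (k, l)) := hinv σ _
    rw [hσ] at h2
    exact h2
  rw [hmain]
  exact Submodule.sum_mem _ fun p _ =>
    Submodule.smul_mem _ _ (Submodule.subset_span ⟨p.1, p.2, rfl⟩)

end Span


/-- the Schur algebra S(n,r) = End_{KΣ_r}(E^{⊗r}) embeds naturally into the
affine Schur algebra: there is an injective unital K-algebra homomorphism
Φ : End_{KΣ_r}(E^{⊗r}) → End_K(Ẽ^{⊗r}) with Φ(ξ^fin_{i,j}) = ξ_{i,j} for i,j ∈ I(n,r),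
whose image is the K-span of {ξ_{i,j} : i,j ∈ I(n,r)} and is contained in the centralizer
algebra End_{KΣ̂_r}(Ẽ^{⊗r}). -/
theorem schurAlgebra_embeds (K : Type*) [Field K] [Infinite K]
    (n r : ℕ) (hn : 1 ≤ n) (hr : 1 ≤ r) :
    ∃ Φ : schurAlgebra K n r →ₐ[K] Module.End K (TensorSpace K r),
      Function.Injective Φ ∧
      (∀ (i j : FinIdx n r) (h : xiFin K n r i j ∈ schurAlgebra K n r),
        Φ ⟨xiFin K n r i j, h⟩ = xi K n r i.1 j.1) ∧
      Set.range Φ =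
        (Submodule.span K
          {f : Module.End K (TensorSpace K r) |
            ∃ i j : FinIdx n r, f = xi K n r i.1 j.1} : Set _) ∧
      ∀ x, Φ x ∈ affineSchur K n r := by
  classical
  have hn' : 0 < n := hn
  have key : ∀ x : Module.End K (FinTensorSpace K n r), x ∈ schurAlgebra K n r →
      phi0 K hn' x ∈ Submodule.span K
        {f : Module.End K (TensorSpace K r) |
          ∃ i j : FinIdx n r, f = xi K n r i.1 j.1} := by
    intro x hx
    have h1 := schur_spanned (K := K) hx
    have h2 : phi0 K hn' x ∈ Submodule.map (phi0 K hn').toLinearMap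
        (Submodule.span K {g : Module.End K (FinTensorSpace K n r) |
          ∃ i j : FinIdx n r, g = xiFin K n r i j}) :=
      Submodule.mem_map_of_mem h1
    rw [Submodule.map_span] at h2
    refine Submodule.span_mono ?_ h2
    rintro y ⟨g', ⟨i, j, rfl⟩, rfl⟩
    exact ⟨i, j, (phi0_xiFin K hn' i j : _)⟩
  refine ⟨(phi0 K hn').comp (schurAlgebra K n r).val,
    (phi0_injective K hn').comp Subtype.val_injective,
    fun i j _ => phi0_xiFin K hn' i j, ?_, ?_⟩
  · ext g
    constructor
    · rintro ⟨⟨x, hx⟩, rfl⟩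
      exact key x hx
    · intro hg
      have hg' : g ∈ Submodule.span K {f : Module.End K (TensorSpace K r) |
          ∃ i j : FinIdx n r, f = xi K n r i.1 j.1} := hg
      have hle : Submodule.span K {f : Module.End K (TensorSpace K r) |
            ∃ i j : FinIdx n r, f = xi K n r i.1 j.1}
          ≤ Submodule.map (phi0 K hn').toLinearMap
              (Subalgebra.toSubmodule (schurAlgebra K n r)) := by
        rw [Submodule.span_le]
        rintro f ⟨i, j, rfl⟩
        exact ⟨xiFin K n r i j, xiFin_mem_schur K i j, phi0_xiFin K hn' i j⟩
      obtain ⟨x, hx, rfl⟩ := hle hg'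
      exact ⟨⟨x, hx⟩, rfl⟩
  · rintro ⟨x, hx⟩
    have h2 := key x hx
    have hle2 : Submodule.span K {f : Module.End K (TensorSpace K r) |
          ∃ i j : FinIdx n r, f = xi K n r i.1 j.1}
        ≤ Subalgebra.toSubmodule (affineSchur K n r) := by
      rw [Submodule.span_le]
      rintro f ⟨i, j, rfl⟩
      exact xi_mem_affine K i.1 j.1
    exact hle2 h2

end AffineSchur
end
end

section
/- Let K be an infinite field and n, r ≥ 1. For every s ∈ {1,…,n} and t ∈ ℤ, the operator D_{s,t} commutes with every right-translation operator T_{σ,ε}; that is, D_{s,t} ∈ End_{KΣ̂_r}(Ẽ^{⊗r}). (This is the statement that the diagonal action of the loop Lie algebra gl_n[t,t⁻¹] on the tensor space commutes with the action of the extended affine Weyl group Σ̂_r.) -/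
noncomputable section

namespace AffineSchur

variable (K : Type*) [Field K] (n r : ℕ)

/-- The operator D_{s,t} ∈ End_K(Ẽ^{⊗r}) (the action of the loop-algebra element
E_{st} ∈ gl_n[t,t⁻¹]): D_{s,t}(v_q) = Σ_{k=1}^{r} [q_k ≡ t (mod n)] · v_{q^k}, where q^k
is obtained from q by replacing its k-th entry q_k by q_k + s − t. -/
def Dop (s t : ℤ) : Module.End K (TensorSpace K r) := by
  classical
  exact Finsupp.lsum K fun q => LinearMap.toSpanSingleton K _
    (∑ k : Fin r, if (n : ℤ) ∣ (q k - t) then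
        Finsupp.single (Function.update q k (q k + s - t)) (1 : K) else 0)

/-- each loop-algebra operator D_{s,t} (s ∈ {1,…,n}, t ∈ ℤ) commutes with
every right-translation operator T_{σ,ε}, i.e. D_{s,t} ∈ End_{KΣ̂_r}(Ẽ^{⊗r}): the
diagonal action of gl_n[t,t⁻¹] on the tensor space commutes with the action of the
extended affine Weyl group Σ̂_r. -/
theorem Dop_commutes_transOp (K : Type*) [Field K] [Infinite K]
    (n r : ℕ) (hn : 1 ≤ n) (hr : 1 ≤ r)
    (s t : ℤ) (hs1 : 1 ≤ s) (hs2 : s ≤ (n : ℤ)) :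
    ∀ (σ : Equiv.Perm (Fin r)) (ε : Fin r → ℤ),
      Dop K n r s t ∘ₗ transOp K n r σ ε = transOp K n r σ ε ∘ₗ Dop K n r s t := by
  classical
  intro σ ε
  apply Finsupp.lhom_ext
  intro q b
  simp only [LinearMap.comp_apply, transOp, Finsupp.lmapDomain_apply,
    Finsupp.mapDomain_single, Dop, Finsupp.lsum_single, LinearMap.toSpanSingleton_apply,
    Finsupp.mapDomain_smul]
  congr 1
  rw [Finsupp.mapDomain_finset_sum]
  rw [← Equiv.sum_comp σ fun k => Finsupp.mapDomain (act n r σ ε)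
    (if (n : ℤ) ∣ (q k - t) then
      Finsupp.single (Function.update q k (q k + s - t)) (1 : K) else 0)]
  refine Finset.sum_congr rfl fun k _ => ?_
  have hdvd : ((n : ℤ) ∣ act n r σ ε q k - t) ↔ ((n : ℤ) ∣ q (σ k) - t) := by
    unfold act
    constructor <;> intro h
    · have := h.sub (Dvd.intro (ε k) rfl)
      simpa [sub_sub_eq_add_sub, add_sub_right_comm] using this
    · have := h.add (Dvd.intro (ε k) rfl)
      have h2 : q (σ k) - t + (n : ℤ) * ε k = q (σ k) + (n : ℤ) * ε k - t := by ring
      rwa [h2] at this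
  by_cases h : (n : ℤ) ∣ q (σ k) - t
  · rw [if_pos (hdvd.mpr h), if_pos h, Finsupp.mapDomain_single]
    congr 1
    funext m
    unfold act
    by_cases hm : m = k
    · subst hm
      simp [Function.update_self, act]
      ring
    · have : σ m ≠ σ k := fun hc => hm (σ.injective hc)
      simp [Function.update_of_ne hm, Function.update_of_ne this, act]
  · rw [if_neg (fun hc => h (hdvd.mp hc)), if_neg h, Finsupp.mapDomain_zero]

end AffineSchur
end
end
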